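/- Let 1 ≤ p < q < ∞ and d ≥ 1. Define on ℝ^d: f(x) = |x|^{-d/q}, k(x) = [χ_{(0,1)}(|x|) − χ_{(1,∞)}(|x|)]f(x), and for 0 < ε < 1, u(x) = [χ_{(0,ε)}(|x|) − χ_{(ε,1)}(|x|) + χ_{(1,1/ε)}(|x|) − χ_{(1/ε,∞)}(|x|)]f(x). Then ‖f‖_{M^p_q} = ‖k‖_{M^p_q} = ‖u‖_{M^p_q}, and for every choice of signs, ‖f ± k ± u‖_{M^p_q} ≥ 3(1 − ε^{d−dp/q})^{1/p} ‖f‖_{M^p_q}. -/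

import Mathlib

open MeasureTheory Metric ENNReal

/-- The small Morrey norm: sup over centers `a` and radii `R ∈ (0,1)` of
`|B(a,R)|^(1/q-1/p) (∫_{B(a,R)} |f|^p)^(1/p)`, valued in `ℝ≥0∞`. -/
noncomputable def smallMorreyNorm (d : ℕ) (p q : ℝ)
    (f : EuclideanSpace ℝ (Fin d) → ℝ) : ℝ≥0∞ :=
  ⨆ (a : EuclideanSpace ℝ (Fin d)) (R : ℝ) (_ : 0 < R) (_ : R < 1),
    volume (ball a R) ^ (1 / q - 1 / p) *
      (∫⁻ y in ball a R, ENNReal.ofReal (|f y| ^ p)) ^ (1 / p)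

/-- The (classical) Morrey norm: sup over all centers `a` and radii `R > 0`. -/
noncomputable def morreyNorm (d : ℕ) (p q : ℝ)
    (f : EuclideanSpace ℝ (Fin d) → ℝ) : ℝ≥0∞ :=
  ⨆ (a : EuclideanSpace ℝ (Fin d)) (R : ℝ) (_ : 0 < R),
    volume (ball a R) ^ (1 / q - 1 / p) *
      (∫⁻ y in ball a R, ENNReal.ofReal (|f y| ^ p)) ^ (1 / p)

section MorreyAux

open Set

/-- Auxiliary integral: `∫_{B(a,R)} |y|^{-γ} dy`. -/
noncomputable def morreyAuxI (d : ℕ) (γ : ℝ) (a : EuclideanSpace ℝ (Fin d)) (R : ℝ) : ℝ≥0∞ :=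
  ∫⁻ y in ball a R, ENNReal.ofReal (‖y‖ ^ (-γ))

variable {d : ℕ} {γ : ℝ}

lemma morreyAux_meas :
    Measurable fun y : EuclideanSpace ℝ (Fin d) => ENNReal.ofReal (‖y‖ ^ (-γ)) := by
  fun_prop

lemma morreyAux_mem_iff (hγ : 0 < γ) {t : ℝ} (ht : 0 < t) (y : EuclideanSpace ℝ (Fin d)) :
    t ≤ ‖y‖ ^ (-γ) ↔ y ≠ 0 ∧ ‖y‖ ≤ t ^ (-γ)⁻¹ := by
  constructor
  · intro h
    have hy : y ≠ 0 := by
      rintro rfl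
      rw [norm_zero, Real.zero_rpow (by linarith)] at h
      linarith
    have hny : 0 < ‖y‖ := norm_pos_iff.2 hy
    exact ⟨hy, (Real.le_rpow_inv_iff_of_neg hny ht (by linarith)).2 h⟩
  · rintro ⟨hy, h⟩
    have hny : 0 < ‖y‖ := norm_pos_iff.2 hy
    exact (Real.le_rpow_inv_iff_of_neg hny ht (by linarith)).1 h

lemma morreyAuxI_smul (hγ : 0 < γ) {R : ℝ} (hR : 0 < R) :
    morreyAuxI d γ 0 R = ENNReal.ofReal (R ^ ((d : ℝ) - γ)) * morreyAuxI d γ 0 1 := by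
  set E := EuclideanSpace ℝ (Fin d)
  set F : E → ℝ≥0∞ := fun y => ENNReal.ofReal (‖y‖ ^ (-γ)) with hF
  have hFm : Measurable F := morreyAux_meas
  have hGm : Measurable ((ball (0:E) R).indicator F) := hFm.indicator measurableSet_ball
  have key : ∫⁻ x : E, (ball (0:E) R).indicator F (R • x)
      = ENNReal.ofReal ((R ^ d)⁻¹) * morreyAuxI d γ 0 R := by
    have h1 : ∫⁻ x : E, (ball (0:E) R).indicator F (R • x)
        = ∫⁻ y, (ball (0:E) R).indicator F y ∂(Measure.map (R • ·) volume) :=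
      (lintegral_map hGm (measurable_const_smul R)).symm
    rw [h1, Measure.map_addHaar_smul volume hR.ne', lintegral_smul_measure,
      lintegral_indicator measurableSet_ball _, finrank_euclideanSpace_fin,
      abs_of_nonneg (by positivity)]
    rfl
  have key2 : ∫⁻ x : E, (ball (0:E) R).indicator F (R • x)
      = ENNReal.ofReal (R ^ (-γ)) * morreyAuxI d γ 0 1 := by
    have h2 : ∀ x : E, (ball (0:E) R).indicator F (R • x)
        = (ball (0:E) 1).indicator (fun x => ENNReal.ofReal (R ^ (-γ)) * F x) x := by
      intro x
      have hnorm : ‖R • x‖ = R * ‖x‖ := by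
        rw [norm_smul, Real.norm_eq_abs, abs_of_pos hR]
      by_cases hx : x ∈ ball (0:E) 1
      · have hmem : R • x ∈ ball (0:E) R := by
          rw [mem_ball_zero_iff] at hx ⊢
          rw [hnorm]
          calc R * ‖x‖ < R * 1 := by exact (mul_lt_mul_iff_right₀ hR).2 hx
          _ = R := mul_one R
        rw [indicator_of_mem hmem, indicator_of_mem hx, hF]
        simp only
        rw [hnorm, Real.mul_rpow hR.le (norm_nonneg x),
          ENNReal.ofReal_mul (by positivity)]
      · have hmem : R • x ∉ ball (0:E) R := by
          rw [mem_ball_zero_iff] at hx ⊢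
          rw [hnorm]
          intro h
          exact hx (by nlinarith)
        rw [indicator_of_notMem hmem, indicator_of_notMem hx]
    simp only [h2]
    rw [lintegral_indicator measurableSet_ball _,
      lintegral_const_mul _ hFm]
    rfl
  have hcancel : ENNReal.ofReal (R ^ d) * ENNReal.ofReal ((R ^ d)⁻¹) = 1 := by
    rw [← ENNReal.ofReal_mul (by positivity), mul_inv_cancel₀ (by positivity)]
    exact ENNReal.ofReal_one
  have hkk := key.symm.trans key2
  calc morreyAuxI d γ 0 R
      = (ENNReal.ofReal (R ^ d) * ENNReal.ofReal ((R ^ d)⁻¹)) * morreyAuxI d γ 0 R := by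
        rw [hcancel, one_mul]
    _ = ENNReal.ofReal (R ^ d) * (ENNReal.ofReal ((R ^ d)⁻¹) * morreyAuxI d γ 0 R) := by ring
    _ = ENNReal.ofReal (R ^ d) * (ENNReal.ofReal (R ^ (-γ)) * morreyAuxI d γ 0 1) := by rw [hkk]
    _ = ENNReal.ofReal (R ^ ((d:ℝ) - γ)) * morreyAuxI d γ 0 1 := by
        rw [← mul_assoc, ← ENNReal.ofReal_mul (by positivity)]
        congr 2
        rw [← Real.rpow_natCast R d, ← Real.rpow_add hR]
        ring_nf

lemma morreyAuxI_pos (hd : 0 < d) (hγ : 0 < γ) : 0 < morreyAuxI d γ 0 1 := by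
  haveI : NeZero d := ⟨hd.ne'⟩
  set E := EuclideanSpace ℝ (Fin d)
  have hmeas : MeasurableSet (ball (0:E) 1 \ {0}) :=
    measurableSet_ball.diff (measurableSet_singleton 0)
  have h1 : ∀ y ∈ ball (0:E) 1 \ {0}, (1 : ℝ≥0∞) ≤ ENNReal.ofReal (‖y‖ ^ (-γ)) := by
    intro y hy
    have hy0 : y ≠ 0 := hy.2
    have hny : 0 < ‖y‖ := norm_pos_iff.2 hy0
    have hny1 : ‖y‖ < 1 := mem_ball_zero_iff.1 hy.1
    have h2 : (1:ℝ) ≤ ‖y‖ ^ (-γ) :=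
      Real.one_le_rpow_of_pos_of_le_one_of_nonpos hny hny1.le (by linarith)
    calc (1:ℝ≥0∞) = ENNReal.ofReal 1 := ENNReal.ofReal_one.symm
      _ ≤ ENNReal.ofReal (‖y‖ ^ (-γ)) := ENNReal.ofReal_le_ofReal h2
  have hμpos : 0 < volume (ball (0:E) 1 \ {0}) := by
    rw [measure_diff_null (by
      have h0 : ({0} : Set E) = sphere (0:E) 0 := by rw [sphere_zero]
      rw [h0]; exact Measure.addHaar_sphere volume 0 0)]
    exact measure_ball_pos volume 0 one_pos
  calc (0:ℝ≥0∞) < volume (ball (0:E) 1 \ {0}) := hμpos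
    _ = ∫⁻ _ in ball (0:E) 1 \ {0}, (1:ℝ≥0∞) := (setLIntegral_one _).symm
    _ ≤ ∫⁻ y in ball (0:E) 1 \ {0}, ENNReal.ofReal (‖y‖ ^ (-γ)) :=
        setLIntegral_mono' hmeas h1
    _ ≤ morreyAuxI d γ 0 1 := lintegral_mono_set diff_subset

lemma morreyAuxI_closedBall (hd : 0 < d) {r : ℝ} :
    (∫⁻ y in closedBall (0 : EuclideanSpace ℝ (Fin d)) r, ENNReal.ofReal (‖y‖ ^ (-γ)))
      = morreyAuxI d γ 0 r := by
  haveI : NeZero d := ⟨hd.ne'⟩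
  set E := EuclideanSpace ℝ (Fin d)
  rcases lt_or_ge r 0 with hr | hr
  · rw [closedBall_eq_empty.2 hr]
    unfold morreyAuxI
    rw [ball_eq_empty.2 hr.le]
  · have hdisj : Disjoint (ball (0:E) r) (sphere (0:E) r) := by
      apply disjoint_left.2
      intro y hyb hys
      rw [mem_ball_zero_iff] at hyb
      rw [mem_sphere_zero_iff_norm] at hys
      exact absurd hys hyb.ne
    rw [← ball_union_sphere, lintegral_union isClosed_sphere.measurableSet hdisj,
      setLIntegral_measure_zero _ _ (Measure.addHaar_sphere volume 0 r), add_zero]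
    rfl

lemma morreyAuxI_lt_top (hd : 0 < d) (hγ : 0 < γ) (hγd : γ < d) :
    morreyAuxI d γ 0 1 < ⊤ := by
  haveI : NeZero d := ⟨hd.ne'⟩
  set E := EuclideanSpace ℝ (Fin d)
  set mB := volume (ball (0:E) 1) with hmB
  set μ' := volume.restrict (ball (0:E) 1) with hμ'
  have hmble : Measurable fun y : E => ‖y‖ ^ (-γ) := by fun_prop
  have heq : morreyAuxI d γ 0 1 = ∫⁻ t in Ioi (0:ℝ), μ' {y : E | t ≤ ‖y‖ ^ (-γ)} :=
    lintegral_eq_lintegral_meas_le μ'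
      (Filter.Eventually.of_forall fun y => Real.rpow_nonneg (norm_nonneg y) _)
      hmble.aemeasurable
  rw [heq]
  have hsplit : (∫⁻ t in Ioi (0:ℝ), μ' {y : E | t ≤ ‖y‖ ^ (-γ)})
      ≤ (∫⁻ t in Ioc (0:ℝ) 1, μ' {y : E | t ≤ ‖y‖ ^ (-γ)})
        + ∫⁻ t in Ioi (1:ℝ), μ' {y : E | t ≤ ‖y‖ ^ (-γ)} :=
    le_trans (lintegral_mono_set Ioi_subset_Ioc_union_Ioi) (lintegral_union_le _ _ _)
  refine lt_of_le_of_lt hsplit (ENNReal.add_lt_top.2 ⟨?_, ?_⟩)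
  · have hb : ∀ t ∈ Ioc (0:ℝ) 1, μ' {y : E | t ≤ ‖y‖ ^ (-γ)} ≤ mB := by
      intro t _
      calc μ' {y : E | t ≤ ‖y‖ ^ (-γ)} ≤ μ' univ := measure_mono (subset_univ _)
        _ = mB := by rw [hμ', Measure.restrict_apply_univ]
    calc (∫⁻ t in Ioc (0:ℝ) 1, μ' {y : E | t ≤ ‖y‖ ^ (-γ)})
        ≤ ∫⁻ _ in Ioc (0:ℝ) 1, mB := setLIntegral_mono' measurableSet_Ioc hb
      _ = mB * volume (Ioc (0:ℝ) 1) := setLIntegral_const _ _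
      _ < ⊤ := ENNReal.mul_lt_top measure_ball_lt_top (by simp)
  · have hb : ∀ t ∈ Ioi (1:ℝ), μ' {y : E | t ≤ ‖y‖ ^ (-γ)}
        ≤ ENNReal.ofReal (t ^ (-((d:ℝ)/γ))) * mB := by
      intro t ht
      have ht0 : (0:ℝ) < t := lt_trans one_pos ht
      have hρ : (0:ℝ) ≤ t ^ (-γ)⁻¹ := Real.rpow_nonneg ht0.le _
      calc μ' {y : E | t ≤ ‖y‖ ^ (-γ)}
          ≤ volume {y : E | t ≤ ‖y‖ ^ (-γ)} := Measure.restrict_le_self _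
        _ ≤ volume (closedBall (0:E) (t ^ (-γ)⁻¹)) := by
            refine measure_mono fun y hy => ?_
            rw [mem_closedBall_zero_iff]
            exact ((morreyAux_mem_iff hγ ht0 y).1 hy).2
        _ = ENNReal.ofReal ((t ^ (-γ)⁻¹) ^ Module.finrank ℝ E) * mB :=
            Measure.addHaar_closedBall _ _ hρ
        _ = ENNReal.ofReal (t ^ (-((d:ℝ)/γ))) * mB := by
            have hfr : Module.finrank ℝ E = d := finrank_euclideanSpace_fin
            congr 2
            rw [hfr, ← Real.rpow_natCast (t ^ (-γ)⁻¹) d, ← Real.rpow_mul ht0.le]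
            congr 1
            rw [← neg_inv, div_eq_mul_inv]
            ring
    calc (∫⁻ t in Ioi (1:ℝ), μ' {y : E | t ≤ ‖y‖ ^ (-γ)})
        ≤ ∫⁻ t in Ioi (1:ℝ), ENNReal.ofReal (t ^ (-((d:ℝ)/γ))) * mB :=
          setLIntegral_mono' measurableSet_Ioi hb
      _ = (∫⁻ t in Ioi (1:ℝ), ENNReal.ofReal (t ^ (-((d:ℝ)/γ)))) * mB :=
          lintegral_mul_const' _ _ measure_ball_lt_top.ne
      _ < ⊤ := by
          refine ENNReal.mul_lt_top ?_ measure_ball_lt_top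
          refine IntegrableOn.setLIntegral_lt_top ?_
          refine integrableOn_Ioi_rpow_of_lt ?_ one_pos
          have h1d : (1:ℝ) < (d:ℝ)/γ := (one_lt_div hγ).2 hγd
          linarith

lemma morreyAuxI_le (hd : 0 < d) (hγ : 0 < γ) (x : EuclideanSpace ℝ (Fin d)) (R : ℝ) :
    morreyAuxI d γ x R ≤ morreyAuxI d γ 0 R := by
  haveI : NeZero d := ⟨hd.ne'⟩
  have hmble : Measurable fun y : EuclideanSpace ℝ (Fin d) => ‖y‖ ^ (-γ) := by fun_prop
  have hnn : ∀ y : EuclideanSpace ℝ (Fin d), 0 ≤ ‖y‖ ^ (-γ) := fun y =>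
    Real.rpow_nonneg (norm_nonneg y) _
  have heq : ∀ z : EuclideanSpace ℝ (Fin d), morreyAuxI d γ z R
      = ∫⁻ t in Ioi (0:ℝ),
          (volume.restrict (ball z R)) {y : EuclideanSpace ℝ (Fin d) | t ≤ ‖y‖ ^ (-γ)} :=
    fun z => lintegral_eq_lintegral_meas_le _
      (Filter.Eventually.of_forall hnn) hmble.aemeasurable
  rw [heq x, heq 0]
  refine setLIntegral_mono' measurableSet_Ioi fun t ht => ?_
  have ht0 : (0:ℝ) < t := ht
  have hSm : MeasurableSet {y : EuclideanSpace ℝ (Fin d) | t ≤ ‖y‖ ^ (-γ)} :=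
    measurableSet_le measurable_const hmble
  rw [Measure.restrict_apply hSm, Measure.restrict_apply hSm]
  have h0null : volume ({0} : Set (EuclideanSpace ℝ (Fin d))) = 0 := by
    have h0 : ({0} : Set (EuclideanSpace ℝ (Fin d))) = sphere (0:EuclideanSpace ℝ (Fin d)) 0 := by
      simp
    rw [h0]; exact Measure.addHaar_sphere volume 0 0
  rcases lt_or_ge (t ^ (-γ)⁻¹) R with hρR | hρR
  · have hS_sub : {y : EuclideanSpace ℝ (Fin d) | t ≤ ‖y‖ ^ (-γ)}
        ⊆ ball (0:EuclideanSpace ℝ (Fin d)) R := by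
      intro y hy
      rw [mem_ball_zero_iff]
      exact lt_of_le_of_lt ((morreyAux_mem_iff hγ ht0 y).1 hy).2 hρR
    calc volume ({y : EuclideanSpace ℝ (Fin d) | t ≤ ‖y‖ ^ (-γ)} ∩ ball x R)
        ≤ volume {y : EuclideanSpace ℝ (Fin d) | t ≤ ‖y‖ ^ (-γ)} := measure_mono inter_subset_left
      _ = volume ({y : EuclideanSpace ℝ (Fin d) | t ≤ ‖y‖ ^ (-γ)}
            ∩ ball (0:EuclideanSpace ℝ (Fin d)) R) := by
          rw [inter_eq_self_of_subset_left hS_sub]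
  · have hsub2 : ball (0:EuclideanSpace ℝ (Fin d)) R \ {0}
        ⊆ {y : EuclideanSpace ℝ (Fin d) | t ≤ ‖y‖ ^ (-γ)}
            ∩ ball (0:EuclideanSpace ℝ (Fin d)) R := by
      intro y hy
      refine ⟨(morreyAux_mem_iff hγ ht0 y).2 ⟨hy.2, ?_⟩, hy.1⟩
      exact le_trans (mem_ball_zero_iff.1 hy.1).le hρR
    calc volume ({y : EuclideanSpace ℝ (Fin d) | t ≤ ‖y‖ ^ (-γ)} ∩ ball x R)
        ≤ volume (ball x R) := measure_mono inter_subset_right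
      _ = volume (ball (0:EuclideanSpace ℝ (Fin d)) R) := Measure.addHaar_ball_center volume x R
      _ = volume (ball (0:EuclideanSpace ℝ (Fin d)) R \ {0}) := (measure_diff_null h0null).symm
      _ ≤ volume ({y : EuclideanSpace ℝ (Fin d) | t ≤ ‖y‖ ^ (-γ)}
            ∩ ball (0:EuclideanSpace ℝ (Fin d)) R) := measure_mono hsub2

end MorreyAux

theorem morrey_octahedral_lower (d : ℕ) (p q : ℝ) (hp : 1 ≤ p) (hpq : p < q)
    (hd : 1 ≤ d) (ε : ℝ) (hε0 : 0 < ε) (hε1 : ε < 1) :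
    letI f : EuclideanSpace ℝ (Fin d) → ℝ := fun x => ‖x‖ ^ (-(d : ℝ) / q)
    letI k : EuclideanSpace ℝ (Fin d) → ℝ :=
      fun x => ((if 0 < ‖x‖ ∧ ‖x‖ < 1 then (1 : ℝ) else 0) -
        (if 1 < ‖x‖ then (1 : ℝ) else 0)) * f x
    letI u : EuclideanSpace ℝ (Fin d) → ℝ :=
      fun x => ((if 0 < ‖x‖ ∧ ‖x‖ < ε then (1 : ℝ) else 0) -
        (if ε < ‖x‖ ∧ ‖x‖ < 1 then (1 : ℝ) else 0) +
        (if 1 < ‖x‖ ∧ ‖x‖ < 1 / ε then (1 : ℝ) else 0) -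
        (if 1 / ε < ‖x‖ then (1 : ℝ) else 0)) * f x
    (morreyNorm d p q f = morreyNorm d p q k ∧
        morreyNorm d p q k = morreyNorm d p q u) ∧
      ∀ s t : ℝ, (s = 1 ∨ s = -1) → (t = 1 ∨ t = -1) →
        ENNReal.ofReal (3 * (1 - ε ^ ((d : ℝ) - d * p / q)) ^ (1 / p)) *
            morreyNorm d p q f ≤
          morreyNorm d p q (fun x => f x + s * k x + t * u x) := by
  haveI : NeZero d := ⟨by omega⟩
  haveI : Nontrivial (EuclideanSpace ℝ (Fin d)) := inferInstance
  have hd0 : 0 < d := hd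
  have hp0 : (0:ℝ) < p := lt_of_lt_of_le one_pos hp
  have hq0 : (0:ℝ) < q := lt_trans hp0 hpq
  have hdR : (0:ℝ) < d := by exact_mod_cast hd0
  have h1ε : (1:ℝ) < 1 / ε := (one_lt_div hε0).2 hε1
  set f : EuclideanSpace ℝ (Fin d) → ℝ := fun x => ‖x‖ ^ (-(d : ℝ) / q) with hfdef
  set k : EuclideanSpace ℝ (Fin d) → ℝ :=
      fun x => ((if 0 < ‖x‖ ∧ ‖x‖ < 1 then (1 : ℝ) else 0) -
        (if 1 < ‖x‖ then (1 : ℝ) else 0)) * f x with hkdef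
  set u : EuclideanSpace ℝ (Fin d) → ℝ :=
      fun x => ((if 0 < ‖x‖ ∧ ‖x‖ < ε then (1 : ℝ) else 0) -
        (if ε < ‖x‖ ∧ ‖x‖ < 1 then (1 : ℝ) else 0) +
        (if 1 < ‖x‖ ∧ ‖x‖ < 1 / ε then (1 : ℝ) else 0) -
        (if 1 / ε < ‖x‖ then (1 : ℝ) else 0)) * f x with hudef
  set γ : ℝ := (d:ℝ) * p / q with hγdef
  have hγ0 : 0 < γ := by rw [hγdef]; positivity
  have hγd : γ < (d:ℝ) := by
    rw [hγdef, div_lt_iff₀ hq0]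
    nlinarith
  set β : ℝ := (d:ℝ) - γ with hβdef
  have hβ0 : 0 < β := by rw [hβdef]; linarith
  -- basic facts about f
  have hfnn : ∀ y, 0 ≤ f y := fun y => Real.rpow_nonneg (norm_nonneg y) _
  have hf0 : ∀ y : EuclideanSpace ℝ (Fin d), ‖y‖ = 0 → f y = 0 := by
    intro y hy
    rw [hfdef]
    simp only
    rw [hy]
    exact Real.zero_rpow (by rw [neg_div]; exact neg_ne_zero.2 (ne_of_gt (by positivity)))
  have hint : ∀ y : EuclideanSpace ℝ (Fin d),
      ENNReal.ofReal (|f y| ^ p) = ENNReal.ofReal (‖y‖ ^ (-γ)) := by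
    intro y
    congr 1
    rw [abs_of_nonneg (hfnn y), hfdef]
    simp only
    rw [← Real.rpow_mul (norm_nonneg y)]
    congr 1
    rw [hγdef]
    field_simp
  have hIf : ∀ (a : EuclideanSpace ℝ (Fin d)) (R : ℝ),
      (∫⁻ y in ball a R, ENNReal.ofReal (|f y| ^ p)) = morreyAuxI d γ a R := by
    intro a R
    unfold morreyAuxI
    exact lintegral_congr fun y => hint y
  -- the constant C
  have hB0 : volume (ball (0:EuclideanSpace ℝ (Fin d)) 1) ≠ 0 :=
    (measure_ball_pos volume _ one_pos).ne'
  have hBtop : volume (ball (0:EuclideanSpace ℝ (Fin d)) 1) ≠ ⊤ := measure_ball_lt_top.ne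
  have hI0 : morreyAuxI d γ 0 1 ≠ 0 := (morreyAuxI_pos hd0 hγ0).ne'
  have hItop : morreyAuxI d γ 0 1 ≠ ⊤ := (morreyAuxI_lt_top hd0 hγ0 hγd).ne
  set C : ℝ≥0∞ := volume (ball (0:EuclideanSpace ℝ (Fin d)) 1) ^ (1/q - 1/p)
      * morreyAuxI d γ 0 1 ^ (1/p) with hCdef
  have hPhi : ∀ R : ℝ, 0 < R →
      volume (ball (0:EuclideanSpace ℝ (Fin d)) R) ^ (1/q - 1/p)
        * morreyAuxI d γ 0 R ^ (1/p) = C := by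
    intro R hR
    rw [Measure.addHaar_ball volume 0 hR.le, finrank_euclideanSpace_fin,
      morreyAuxI_smul hγ0 hR]
    rw [ENNReal.mul_rpow_of_ne_zero (by simp [ENNReal.ofReal_eq_zero]; positivity) hB0,
      ENNReal.mul_rpow_of_nonneg _ _ (by positivity : (0:ℝ) ≤ 1/p),
      ENNReal.ofReal_rpow_of_pos (by positivity),
      ENNReal.ofReal_rpow_of_pos (Real.rpow_pos_of_pos hR _),
      mul_mul_mul_comm, ← ENNReal.ofReal_mul (by positivity)]
    have hexp : (R ^ d) ^ (1/q - 1/p) * (R ^ β) ^ (1/p) = 1 := by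
      rw [← Real.rpow_natCast R d, ← Real.rpow_mul hR.le, ← Real.rpow_mul hR.le,
        ← Real.rpow_add hR]
      rw [show (d:ℝ) * (1/q - 1/p) + β * (1/p) = 0 by rw [hβdef, hγdef]; field_simp; ring]
      exact Real.rpow_zero R
    rw [hexp, ENNReal.ofReal_one, one_mul]
  have hCf : morreyNorm d p q f = C := by
    apply le_antisymm
    · refine iSup_le fun a => iSup_le fun R => iSup_le fun hR => ?_
      rw [hIf a R, Measure.addHaar_ball_center volume a R]
      calc volume (ball (0:EuclideanSpace ℝ (Fin d)) R) ^ (1/q - 1/p)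
            * morreyAuxI d γ a R ^ (1/p)
          ≤ volume (ball (0:EuclideanSpace ℝ (Fin d)) R) ^ (1/q - 1/p)
            * morreyAuxI d γ 0 R ^ (1/p) :=
            mul_le_mul_right
              (ENNReal.rpow_le_rpow (morreyAuxI_le hd0 hγ0 a R) (by positivity)) _
        _ = C := hPhi R hR
    · unfold morreyNorm
      refine le_trans ?_
        (le_iSup_of_le (0:EuclideanSpace ℝ (Fin d))
          (le_iSup_of_le (1:ℝ) (le_iSup_of_le one_pos (le_refl _))))
      rw [hIf 0 1]
  -- norm only depends on |·|
  have hcongr : ∀ g₁ g₂ : EuclideanSpace ℝ (Fin d) → ℝ,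
      (∀ᵐ y : EuclideanSpace ℝ (Fin d) ∂volume, |g₁ y| = |g₂ y|) →
      morreyNorm d p q g₁ = morreyNorm d p q g₂ := by
    intro g₁ g₂ h
    unfold morreyNorm
    refine iSup_congr fun a => iSup_congr fun R => iSup_congr fun hR => ?_
    have heq2 : (∫⁻ y in ball a R, ENNReal.ofReal (|g₁ y| ^ p))
        = ∫⁻ y in ball a R, ENNReal.ofReal (|g₂ y| ^ p) :=
      lintegral_congr_ae (ae_restrict_of_ae (h.mono fun y hy => by simp only [hy]))
    rw [heq2]
  -- regional values of k and u
  have hkmid : ∀ y : EuclideanSpace ℝ (Fin d), 0 < ‖y‖ → ‖y‖ < 1 → k y = f y := by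
    intro y h1 h2
    rw [hkdef]
    simp only
    rw [if_pos ⟨h1, h2⟩, if_neg (by linarith)]
    ring
  have hkout : ∀ y : EuclideanSpace ℝ (Fin d), 1 < ‖y‖ → k y = -f y := by
    intro y h1
    rw [hkdef]
    simp only
    rw [if_neg (by rintro ⟨-, h⟩; linarith), if_pos h1]
    ring
  have hk0 : ∀ y : EuclideanSpace ℝ (Fin d), ‖y‖ = 0 → k y = 0 := by
    intro y h1
    rw [hkdef]
    simp only
    rw [if_neg (by rintro ⟨h, -⟩; linarith), if_neg (by intro h; linarith)]
    ring
  have hu1 : ∀ y : EuclideanSpace ℝ (Fin d), 0 < ‖y‖ → ‖y‖ < ε → u y = f y := by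
    intro y h1 h2
    rw [hudef]
    simp only
    rw [if_pos ⟨h1, h2⟩, if_neg (by rintro ⟨h, -⟩; linarith),
      if_neg (by rintro ⟨h, -⟩; linarith), if_neg (by intro h; linarith)]
    ring
  have hu2 : ∀ y : EuclideanSpace ℝ (Fin d), ε < ‖y‖ → ‖y‖ < 1 → u y = -f y := by
    intro y h1 h2
    rw [hudef]
    simp only
    rw [if_neg (by rintro ⟨-, h⟩; linarith), if_pos ⟨h1, h2⟩,
      if_neg (by rintro ⟨h, -⟩; linarith), if_neg (by intro h; linarith)]
    ring
  have hu3 : ∀ y : EuclideanSpace ℝ (Fin d), 1 < ‖y‖ → ‖y‖ < 1/ε → u y = f y := by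
    intro y h1 h2
    rw [hudef]
    simp only
    rw [if_neg (by rintro ⟨-, h⟩; linarith), if_neg (by rintro ⟨-, h⟩; linarith),
      if_pos ⟨h1, h2⟩, if_neg (by intro h; linarith)]
    ring
  have hu4 : ∀ y : EuclideanSpace ℝ (Fin d), 1/ε < ‖y‖ → u y = -f y := by
    intro y h1
    rw [hudef]
    simp only
    rw [if_neg (by rintro ⟨-, h⟩; linarith), if_neg (by rintro ⟨-, h⟩; linarith),
      if_neg (by rintro ⟨-, h⟩; linarith), if_pos h1]
    ring
  have hu0 : ∀ y : EuclideanSpace ℝ (Fin d), ‖y‖ = 0 → u y = 0 := by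
    intro y h1
    rw [hudef]
    simp only
    rw [if_neg (by rintro ⟨h, -⟩; linarith), if_neg (by rintro ⟨h, -⟩; linarith),
      if_neg (by rintro ⟨h, -⟩; linarith), if_neg (by intro h; linarith)]
    ring
  -- |k| = |f| a.e. and |u| = |f| a.e.
  have hfk : ∀ᵐ y : EuclideanSpace ℝ (Fin d) ∂volume, |k y| = |f y| := by
    rw [ae_iff]
    refine measure_mono_null ?_
      (Measure.addHaar_sphere volume (0:EuclideanSpace ℝ (Fin d)) 1)
    intro y hy
    simp only [Set.mem_setOf_eq] at hy
    by_contra hne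
    have hne' : ‖y‖ ≠ 1 := by rwa [mem_sphere_zero_iff_norm] at hne
    apply hy
    rcases lt_trichotomy ‖y‖ 1 with h | h | h
    · rcases eq_or_lt_of_le (norm_nonneg y) with h0 | h0
      · rw [hk0 y h0.symm, hf0 y h0.symm]
      · rw [hkmid y h0 h]
    · exact absurd h hne'
    · rw [hkout y h, abs_neg]
  have hfu : ∀ᵐ y : EuclideanSpace ℝ (Fin d) ∂volume, |u y| = |f y| := by
    rw [ae_iff]
    refine measure_mono_null (?_ :
        _ ⊆ (sphere (0:EuclideanSpace ℝ (Fin d)) ε ∪ sphere (0:EuclideanSpace ℝ (Fin d)) 1)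
          ∪ sphere (0:EuclideanSpace ℝ (Fin d)) (1/ε)) ?_
    · intro y hy
      simp only [Set.mem_setOf_eq] at hy
      by_contra hne
      simp only [Set.mem_union, mem_sphere_zero_iff_norm, not_or] at hne
      obtain ⟨⟨hne1, hne2⟩, hne3⟩ := hne
      apply hy
      rcases lt_trichotomy ‖y‖ ε with h | h | h
      · rcases eq_or_lt_of_le (norm_nonneg y) with h0 | h0
        · rw [hu0 y h0.symm, hf0 y h0.symm]
        · rw [hu1 y h0 h]
      · exact absurd h hne1
      · rcases lt_trichotomy ‖y‖ 1 with h' | h' | h'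
        · rw [hu2 y h h', abs_neg]
        · exact absurd h' hne2
        · rcases lt_trichotomy ‖y‖ (1/ε) with h'' | h'' | h''
          · rw [hu3 y h' h'']
          · exact absurd h'' hne3
          · rw [hu4 y h'', abs_neg]
    · refine measure_union_null (measure_union_null ?_ ?_) ?_ <;>
        exact Measure.addHaar_sphere volume _ _
  refine ⟨⟨(hcongr k f hfk).symm, (hcongr k f hfk).trans (hcongr u f hfu).symm⟩, ?_⟩
  -- second part
  intro s t hs ht
  have main : ∀ R₀ : ℝ, 0 < R₀ →
      (∀ x : EuclideanSpace ℝ (Fin d), ε * R₀ < ‖x‖ → ‖x‖ < R₀ →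
        f x + s * k x + t * u x = 3 * f x) →
      ENNReal.ofReal (3 * (1 - ε ^ β) ^ (1/p)) * morreyNorm d p q f
        ≤ morreyNorm d p q (fun x => f x + s * k x + t * u x) := by
    intro R₀ hR₀ hg3
    have hεR₀ : ε * R₀ < R₀ := by nlinarith
    have hεR₀0 : (0:ℝ) < ε * R₀ := by positivity
    have hεβ : ε ^ β < 1 := Real.rpow_lt_one hε0.le hε1 hβ0
    have hεβ0 : (0:ℝ) ≤ ε ^ β := Real.rpow_nonneg hε0.le _
    have hcoeff : ENNReal.ofReal (3 * (1 - ε ^ β) ^ (1/p))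
        = ENNReal.ofReal 3 * (1 - ENNReal.ofReal (ε ^ β)) ^ (1/p) := by
      rw [ENNReal.ofReal_mul (by norm_num),
        ← ENNReal.ofReal_rpow_of_pos (by linarith),
        ENNReal.ofReal_sub _ hεβ0, ENNReal.ofReal_one]
    set A : Set (EuclideanSpace ℝ (Fin d)) :=
      ball (0:EuclideanSpace ℝ (Fin d)) R₀
        \ closedBall (0:EuclideanSpace ℝ (Fin d)) (ε * R₀) with hAdef
    have hAmeas : MeasurableSet A := measurableSet_ball.diff measurableSet_closedBall
    have hsplit : morreyAuxI d γ 0 R₀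
        = morreyAuxI d γ 0 (ε * R₀) + ∫⁻ y in A, ENNReal.ofReal (‖y‖ ^ (-γ)) := by
      calc morreyAuxI d γ 0 R₀
          = ∫⁻ y in closedBall (0:EuclideanSpace ℝ (Fin d)) (ε * R₀) ∪ A,
              ENNReal.ofReal (‖y‖ ^ (-γ)) := by
            rw [hAdef, Set.union_diff_cancel (closedBall_subset_ball hεR₀)]
            rfl
        _ = (∫⁻ y in closedBall (0:EuclideanSpace ℝ (Fin d)) (ε * R₀),
              ENNReal.ofReal (‖y‖ ^ (-γ))) + ∫⁻ y in A, ENNReal.ofReal (‖y‖ ^ (-γ)) :=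
            lintegral_union hAmeas disjoint_sdiff_self_right
        _ = morreyAuxI d γ 0 (ε * R₀) + ∫⁻ y in A, ENNReal.ofReal (‖y‖ ^ (-γ)) := by
            rw [morreyAuxI_closedBall hd0]
    have hcb : morreyAuxI d γ 0 (ε * R₀)
        = ENNReal.ofReal (ε ^ β) * morreyAuxI d γ 0 R₀ := by
      rw [morreyAuxI_smul hγ0 hεR₀0, morreyAuxI_smul hγ0 hR₀, ← mul_assoc,
        ← ENNReal.ofReal_mul hεβ0]
      congr 2
      rw [← Real.mul_rpow hε0.le hR₀.le]
    have hIRtop : morreyAuxI d γ 0 R₀ ≠ ⊤ := by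
      rw [morreyAuxI_smul hγ0 hR₀]
      exact (ENNReal.mul_lt_top ENNReal.ofReal_lt_top (morreyAuxI_lt_top hd0 hγ0 hγd)).ne
    have hA_ge : (1 - ENNReal.ofReal (ε ^ β)) * morreyAuxI d γ 0 R₀
        ≤ ∫⁻ y in A, ENNReal.ofReal (‖y‖ ^ (-γ)) := by
      rw [ENNReal.sub_mul (fun _ _ => hIRtop), one_mul]
      refine tsub_le_iff_left.2 ?_
      rw [← hcb]
      exact le_of_eq hsplit
    have hAint : (∫⁻ y in A, ENNReal.ofReal (|f y + s * k y + t * u y| ^ p))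
        = ENNReal.ofReal (3 ^ p) * ∫⁻ y in A, ENNReal.ofReal (‖y‖ ^ (-γ)) := by
      rw [← lintegral_const_mul _ morreyAux_meas]
      refine setLIntegral_congr_fun hAmeas (fun y hy => ?_)
      obtain ⟨hyball, hycb⟩ := hy
      have h1 : ε * R₀ < ‖y‖ := by
        by_contra hle
        exact hycb (mem_closedBall_zero_iff.2 (not_lt.1 hle))
      have h2 : ‖y‖ < R₀ := mem_ball_zero_iff.1 hyball
      rw [hg3 y h1 h2, abs_of_nonneg (by have := hfnn y; linarith),
        Real.mul_rpow (by norm_num) (hfnn y),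
        ENNReal.ofReal_mul (Real.rpow_nonneg (by norm_num) p)]
      congr 1
      rw [← hint y, abs_of_nonneg (hfnn y)]
    have h3p : (ENNReal.ofReal (3 ^ p)) ^ (1/p) = ENNReal.ofReal 3 := by
      rw [ENNReal.ofReal_rpow_of_pos (by positivity)]
      congr 1
      rw [← Real.rpow_mul (by norm_num : (0:ℝ) ≤ 3), mul_one_div_cancel hp0.ne',
        Real.rpow_one]
    have h5 : ENNReal.ofReal (3 ^ p) * ((1 - ENNReal.ofReal (ε ^ β)) * morreyAuxI d γ 0 R₀)
        ≤ ∫⁻ y in ball (0:EuclideanSpace ℝ (Fin d)) R₀,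
            ENNReal.ofReal (|f y + s * k y + t * u y| ^ p) := by
      calc ENNReal.ofReal (3 ^ p) * ((1 - ENNReal.ofReal (ε ^ β)) * morreyAuxI d γ 0 R₀)
          ≤ ENNReal.ofReal (3 ^ p) * ∫⁻ y in A, ENNReal.ofReal (‖y‖ ^ (-γ)) :=
            mul_le_mul_right hA_ge _
        _ = ∫⁻ y in A, ENNReal.ofReal (|f y + s * k y + t * u y| ^ p) := hAint.symm
        _ ≤ ∫⁻ y in ball (0:EuclideanSpace ℝ (Fin d)) R₀,
              ENNReal.ofReal (|f y + s * k y + t * u y| ^ p) :=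
            lintegral_mono_set Set.diff_subset
    calc ENNReal.ofReal (3 * (1 - ε ^ β) ^ (1/p)) * morreyNorm d p q f
        = (ENNReal.ofReal 3 * (1 - ENNReal.ofReal (ε ^ β)) ^ (1/p)) * C := by
          rw [hcoeff, hCf]
      _ = volume (ball (0:EuclideanSpace ℝ (Fin d)) R₀) ^ (1/q - 1/p)
            * (ENNReal.ofReal (3 ^ p)
              * ((1 - ENNReal.ofReal (ε ^ β)) * morreyAuxI d γ 0 R₀)) ^ (1/p) := by
          rw [ENNReal.mul_rpow_of_nonneg _ _ (by positivity : (0:ℝ) ≤ 1/p),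
            ENNReal.mul_rpow_of_nonneg _ _ (by positivity : (0:ℝ) ≤ 1/p), h3p,
            ← hPhi R₀ hR₀]
          ring
      _ ≤ volume (ball (0:EuclideanSpace ℝ (Fin d)) R₀) ^ (1/q - 1/p)
            * (∫⁻ y in ball (0:EuclideanSpace ℝ (Fin d)) R₀,
                ENNReal.ofReal (|f y + s * k y + t * u y| ^ p)) ^ (1/p) :=
          mul_le_mul_right (ENNReal.rpow_le_rpow h5 (by positivity)) _
      _ ≤ morreyNorm d p q (fun x => f x + s * k x + t * u x) := by
          unfold morreyNorm
          exact le_iSup_of_le (0:EuclideanSpace ℝ (Fin d))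
            (le_iSup_of_le R₀ (le_iSup_of_le hR₀ (le_refl _)))
  rcases hs with rfl | rfl <;> rcases ht with rfl | rfl
  · refine main ε hε0 fun x h1 h2 => ?_
    have h0 : 0 < ‖x‖ := lt_trans (by positivity) h1
    rw [hkmid x h0 (lt_trans h2 hε1), hu1 x h0 h2]
    ring
  · refine main 1 one_pos fun x h1 h2 => ?_
    rw [mul_one] at h1
    have h0 : 0 < ‖x‖ := lt_trans hε0 h1
    rw [hkmid x h0 h2, hu2 x h1 h2]
    ring
  · refine main (1/ε) (by positivity) fun x h1 h2 => ?_
    rw [mul_one_div_cancel hε0.ne'] at h1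
    rw [hkout x h1, hu3 x h1 h2]
    ring
  · refine main (1/ε * (1/ε)) (by positivity) fun x h1 h2 => ?_
    have hεsimp : ε * (1/ε * (1/ε)) = 1/ε := by field_simp
    rw [hεsimp] at h1
    rw [hkout x (lt_trans h1ε h1), hu4 x h1]
    ring
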